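/- Consider mechanism M2 (full information, top-K allocation, continuous action space) with N ≥ 1 users, reward R > 0, K ≥ 1, cost parameter c > 0, and types q_i ∈ (0,1]. Then the game has no pure Nash equilibrium: for every action profile (x_1, …, x_N) with x_i ∈ [0, q_i] for all i, there exists a user who can strictly increase her utility by unilaterally changing her own action within [0, q_i]. -/

import Mathlib

open Finset

open scoped Classical in
/-- Top-K allocation reward with deterministic index tie-breaking:
user `i` gets `R / K` if she contributes positively and the number of users
with strictly larger contribution plus the number of earlier-indexed users
with equal contribution is less than `K`. -/
noncomputable def topKReward {N : ℕ} (K : ℕ) (R : ℝ) (x : Fin N → ℝ) (i : Fin N) : ℝ :=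
  if 0 < x i ∧
      ((univ.filter (fun j => x i < x j)).card +
        (univ.filter (fun j => j < i ∧ x j = x i)).card < K)
  then R / K else 0

/-- Utility in mechanism M2: top-K reward minus linear cost `c * x i / q i`. -/
noncomputable def utilM2 {N : ℕ} (K : ℕ) (R c : ℝ) (q x : Fin N → ℝ) (i : Fin N) : ℝ :=
  topKReward K R x i - c * x i / q i

theorem stmt_2 (N K : ℕ) (hN : 1 ≤ N) (hK : 1 ≤ K) (R c : ℝ) (hR : 0 < R) (hc : 0 < c)
    (q : Fin N → ℝ) (hq1 : ∀ i, q i ≤ 1) (hq0 : ∀ i, 0 < q i) :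
    ∀ x : Fin N → ℝ, (∀ i, x i ∈ Set.Icc 0 (q i)) →
      ∃ i : Fin N, ∃ y ∈ Set.Icc 0 (q i),
        utilM2 K R c q x i < utilM2 K R c q (Function.update x i y) i := by
  classical
  intro x hx
  have hK0 : (0:ℝ) < K := by exact_mod_cast hK
  by_cases hz : ∀ i, x i = 0
  · -- all zero: user 0 deviates to a small positive action
    refine ⟨⟨0, hN⟩, ?_⟩
    set i : Fin N := ⟨0, hN⟩ with hi
    set y : ℝ := min (q i) (R * q i / (2 * c * K)) with hy
    have hy0 : 0 < y := lt_min (hq0 i) (div_pos (mul_pos hR (hq0 i)) (by positivity))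
    refine ⟨y, ⟨le_of_lt hy0, min_le_left _ _⟩, ?_⟩
    have hux : utilM2 K R c q x i = 0 := by
      simp [utilM2, topKReward, hz i]
    have hrew : topKReward K R (Function.update x i y) i = R / K := by
      rw [topKReward, if_pos]
      refine ⟨by simpa using hy0, ?_⟩
      have h1 : (univ.filter (fun j => Function.update x i y i <
          Function.update x i y j)) = ∅ := by
        ext j
        simp only [mem_filter, mem_univ, true_and, notMem_empty, iff_false, not_lt]
        rcases eq_or_ne j i with rfl | hji
        · simp
        · simp [Function.update_of_ne hji, Function.update_self, hz j, le_of_lt hy0]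
      have h2 : (univ.filter (fun j => j < i ∧ Function.update x i y j =
          Function.update x i y i)) = ∅ := by
        ext j
        simp only [mem_filter, mem_univ, true_and, notMem_empty, iff_false, not_and]
        intro hji
        have hne : j ≠ i := ne_of_lt hji
        rw [Function.update_of_ne hne, Function.update_self, hz j]
        exact (ne_of_lt hy0)
      rw [h1, h2]
      simpa using (show 0 < K by omega)
    have hcost : c * y / q i < R / K := by
      rw [div_lt_div_iff₀ (hq0 i) hK0]
      have h2 : y ≤ R * q i / (2 * c * K) := min_le_right _ _
      have hq := hq0 i
      have : c * y ≤ R * q i / (2 * K) := by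
        rw [le_div_iff₀ (by positivity)]
        have := mul_le_mul_of_nonneg_left h2 (le_of_lt hc)
        calc c * y * (2 * K) ≤ c * (R * q i / (2 * c * K)) * (2 * K) := by
              apply mul_le_mul_of_nonneg_right this (by positivity)
          _ = R * q i := by field_simp
      have h3 : R * q i / (2 * K) * K = R * q i / 2 := by field_simp
      nlinarith [mul_le_mul_of_nonneg_right this hK0.le, h3, mul_pos hR (hq0 i)]
    rw [hux, utilM2, hrew]
    have hupd : Function.update x i y i = y := Function.update_self i y x
    rw [hupd]
    linarith
  · push_neg at hz
    by_cases hlose : ∃ i, 0 < x i ∧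
        ¬ ((univ.filter (fun j => x i < x j)).card +
            (univ.filter (fun j => j < i ∧ x j = x i)).card < K)
    · -- a positive contributor who loses deviates to 0
      obtain ⟨i, hxi, hlost⟩ := hlose
      refine ⟨i, 0, ⟨le_refl 0, le_of_lt (hq0 i)⟩, ?_⟩
      have hnew : utilM2 K R c q (Function.update x i 0) i = 0 := by
        simp [utilM2, topKReward]
      have hold : utilM2 K R c q x i = - (c * x i / q i) := by
        rw [utilM2, topKReward, if_neg]
        · ring
        · rintro ⟨-, h⟩; exact hlost h
      rw [hnew, hold]
      have : 0 < c * x i / q i := div_pos (mul_pos hc hxi) (hq0 i)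
      linarith
    · -- every positive contributor wins; minimal-value, maximal-index winner lowers her bid
      push_neg at hlose
      obtain ⟨i0, hi0⟩ := hz
      have hxi0 : 0 < x i0 := lt_of_le_of_ne (hx i0).1 (Ne.symm hi0)
      set S : Finset (Fin N) := univ.filter (fun j => 0 < x j) with hS
      have hSne : S.Nonempty := ⟨i0, by simp [hS, hxi0]⟩
      set m : ℝ := S.inf' hSne x with hm
      obtain ⟨im, himS, him⟩ := Finset.exists_mem_eq_inf' hSne x
      set T : Finset (Fin N) := S.filter (fun j => x j = m) with hT
      have hTne : T.Nonempty := ⟨im, by simp [hT, himS, him.symm, hm]⟩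
      set i : Fin N := T.max' hTne with hidef
      have hiT : i ∈ T := T.max'_mem hTne
      have hxm : x i = m := (mem_filter.mp hiT).2
      have hxi : 0 < x i := (mem_filter.mp (mem_filter.mp hiT).1).2
      have hle : ∀ j, x j = x i → j ≤ i := by
        intro j hj
        apply T.le_max' j
        rw [hT, mem_filter, hS, mem_filter]
        exact ⟨⟨mem_univ j, hj ▸ hxi⟩, hj.trans hxm⟩
      -- the threshold below x i
      set B : Finset ℝ := insert 0 ((univ.filter (fun j => x j < x i)).image x) with hB
      have hBne : B.Nonempty := insert_nonempty _ _
      set a : ℝ := B.max' hBne with ha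
      have haxi : a < x i := by
        rw [ha, Finset.max'_lt_iff]
        intro b hb
        rw [hB, mem_insert] at hb
        rcases hb with rfl | hb
        · exact hxi
        · obtain ⟨j, hj, rfl⟩ := mem_image.mp hb
          exact (mem_filter.mp hj).2
      have ha0 : 0 ≤ a := B.le_max' 0 (mem_insert_self _ _)
      set y : ℝ := (a + x i) / 2 with hydef
      have hay : a < y := by rw [hydef]; linarith
      have hyx : y < x i := by rw [hydef]; linarith
      have hy0 : 0 < y := lt_of_le_of_lt ha0 hay
      have hkey : ∀ j, j ≠ i → (y < x j ↔ x i ≤ x j) := by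
        intro j hj
        constructor
        · intro h
          by_contra hlt
          push_neg at hlt
          have : x j ∈ B := by
            rw [hB]
            exact mem_insert_of_mem (mem_image_of_mem x (mem_filter.mpr ⟨mem_univ j, hlt⟩))
          exact absurd (lt_of_le_of_lt (B.le_max' _ this) hay) (not_lt.mpr (le_of_lt h))
        · intro h; exact lt_of_lt_of_le hyx h
      have hney : ∀ j, x j ≠ y := by
        intro j hj
        have hlt : x j < x i := hj ▸ hyx
        have : x j ∈ B := by
          rw [hB]
          exact mem_insert_of_mem (mem_image_of_mem x (mem_filter.mpr ⟨mem_univ j, hlt⟩))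
        have h2 : x j ≤ a := B.le_max' _ this
        rw [hj] at h2
        linarith
      refine ⟨i, y, ⟨le_of_lt hy0, le_of_lt (lt_of_lt_of_le hyx (hx i).2)⟩, ?_⟩
      have hwin := hlose i hxi
      set x' : Fin N → ℝ := Function.update x i y with hx'
      have hx'i : x' i = y := Function.update_self i y x
      have hx'j : ∀ j, j ≠ i → x' j = x j := fun j hj => Function.update_of_ne hj y x
      -- new first count
      have hc1 : (univ.filter (fun j => x' i < x' j)) =
          (univ.filter (fun j => x i < x j)) ∪ (univ.filter (fun j => j < i ∧ x j = x i)) := by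
        ext j
        simp only [mem_filter, mem_univ, true_and, mem_union]
        rcases eq_or_ne j i with rfl | hj
        · simp [hx'i, lt_irrefl]
        · rw [hx'i, hx'j j hj]
          constructor
          · intro h
            rcases lt_or_eq_of_le ((hkey j hj).mp h) with h' | h'
            · exact Or.inl h'
            · exact Or.inr ⟨lt_of_le_of_ne (hle j h'.symm) hj, h'.symm⟩
          · rintro (h | ⟨-, h⟩)
            · exact (hkey j hj).mpr (le_of_lt h)
            · exact (hkey j hj).mpr h.ge
      have hdisj : Disjoint (univ.filter (fun j => x i < x j))
          (univ.filter (fun j => j < i ∧ x j = x i)) := by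
        rw [disjoint_left]
        intro j h1 h2
        have := (mem_filter.mp h1).2
        have := (mem_filter.mp h2).2.2
        linarith
      have hc2 : (univ.filter (fun j => j < i ∧ x' j = x' i)) = ∅ := by
        ext j
        simp only [mem_filter, mem_univ, true_and, notMem_empty, iff_false, not_and]
        intro hji
        rw [hx'j j (ne_of_lt hji), hx'i]
        exact hney j
      have hnewrew : topKReward K R x' i = R / K := by
        rw [topKReward, if_pos]
        refine ⟨by rw [hx'i]; exact hy0, ?_⟩
        rw [hc1, hc2, card_union_of_disjoint hdisj]
        simpa using hwin
      have holdrew : topKReward K R x i = R / K := by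
        rw [topKReward, if_pos ⟨hxi, hwin⟩]
      rw [utilM2, utilM2, hnewrew, holdrew, hx'i]
      have hlt : c * y / q i < c * x i / q i := by
        gcongr
        exact hq0 i
      linarith
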